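/- For every positive integer k, the graph XI_{2k} satisfies χ'_irr(XI_{2k}) = 2, i.e., it admits a locally irregular edge-coloring using 2 colors but not one using 1 color. -/
import Mathlib


/-- A graph is *locally irregular* if no two adjacent vertices have the same degree. -/
def LocallyIrregular {V : Type*} (G : SimpleGraph V) : Prop :=
  ∀ ⦃u v : V⦄, G.Adj u v → (G.neighborSet u).ncard ≠ (G.neighborSet v).ncard

/-- `HasLIEC G k` : `G` admits a locally irregular edge-coloring using at most `k` colors,
i.e. an assignment of one of `k` colors to every edge such that the edges of each fixed
color induce a locally irregular graph. -/
def HasLIEC {V : Type*} (G : SimpleGraph V) (k : ℕ) : Prop :=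
  ∃ c : Sym2 V → Fin k, ∀ i : Fin k,
    LocallyIrregular (SimpleGraph.fromEdgeSet {e | e ∈ G.edgeSet ∧ c e = i})

/-- The graph `XI n` : two disjoint cycles of length `3n` (the `inl` vertices `v_a` and the
`inr` vertices `u_a`, `a ∈ ZMod (3n)`), together with the edges `v_{3i} u_{3i+1}`,
`v_{3i+1} u_{3i}` and `v_{3i+2} u_{3i+2}` for all multiples `3i` modulo `3n`. -/
def XI (n : ℕ) : SimpleGraph (ZMod (3 * n) ⊕ ZMod (3 * n)) :=
  SimpleGraph.fromRel (fun x y =>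
    match x, y with
    | Sum.inl a, Sum.inl b => a - b = 1
    | Sum.inr a, Sum.inr b => a - b = 1
    | Sum.inl a, Sum.inr b =>
        ∃ i : ZMod (3 * n),
          (a = 3 * i ∧ b = 3 * i + 1) ∨ (a = 3 * i + 1 ∧ b = 3 * i) ∨
            (a = 3 * i + 2 ∧ b = 3 * i + 2)
    | Sum.inr _, Sum.inl _ => False)

open SimpleGraph

namespace XIaux

variable (k : ℕ)

def r : ZMod (3 * (2 * k)) →+* ZMod 6 :=
  ZMod.castHom (show (6:ℕ) ∣ 3*(2*k) from ⟨k, by ring⟩) (ZMod 6)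

def r3 : ZMod (3 * (2 * k)) →+* ZMod 3 :=
  ZMod.castHom (show (3:ℕ) ∣ 3*(2*k) from ⟨2*k, rfl⟩) (ZMod 3)

def s3 : ZMod 6 →+* ZMod 3 := ZMod.castHom (show (3:ℕ) ∣ 6 from ⟨2, rfl⟩) (ZMod 3)

lemma s3_r (a : ZMod (3 * (2 * k))) : s3 (r k a) = r3 k a := by
  rw [r, r3, s3, ← RingHom.comp_apply, ZMod.castHom_comp]

def pi (a : ZMod (3 * (2 * k))) : ZMod (3 * (2 * k)) :=
  if r3 k a = 0 then a + 1 else if r3 k a = 1 then a - 1 else a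

def pi6 (ρ : ZMod 6) : ZMod 6 :=
  if s3 ρ = 0 then ρ + 1 else if s3 ρ = 1 then ρ - 1 else ρ

lemma r_pi (a : ZMod (3 * (2 * k))) : r k (pi k a) = pi6 (r k a) := by
  rw [pi, pi6, s3_r]
  split_ifs <;> simp [map_add, map_sub, map_one]

variable (hk : 1 ≤ k)
include hk

lemma one_ne : (1 : ZMod (3 * (2 * k))) ≠ 0 := by
  intro h
  have h' : ((1:ℕ) : ZMod (3*(2*k))) = 0 := by exact_mod_cast h
  rw [ZMod.natCast_eq_zero_iff] at h'
  exact absurd (Nat.le_of_dvd (by norm_num) h') (by omega)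

lemma two_ne : (2 : ZMod (3 * (2 * k))) ≠ 0 := by
  intro h
  have h' : ((2:ℕ) : ZMod (3*(2*k))) = 0 := by exact_mod_cast h
  rw [ZMod.natCast_eq_zero_iff] at h'
  exact absurd (Nat.le_of_dvd (by norm_num) h') (by omega)

lemma mult3 (a : ZMod (3 * (2 * k))) :
    (∃ i : ZMod (3 * (2 * k)), a = 3 * i) ↔ r3 k a = 0 := by
  haveI : NeZero (3 * (2 * k)) := ⟨by omega⟩
  constructor
  · rintro ⟨i, rfl⟩
    rw [map_mul]
    have : (r3 k) 3 = 3 := map_ofNat _ 3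
    rw [this, show (3 : ZMod 3) = 0 from rfl, zero_mul]
  · intro h
    have hv : ((a.val : ℕ) : ZMod (3*(2*k))) = a := ZMod.natCast_zmod_val a
    have h3 : ((a.val : ℕ) : ZMod 3) = 0 := by
      rw [← map_natCast (r3 k) a.val, hv, h]
    rw [ZMod.natCast_eq_zero_iff] at h3
    obtain ⟨m, hm⟩ := h3
    exact ⟨(m : ZMod (3*(2*k))), by rw [← hv, hm]; push_cast; ring⟩

lemma pi_pi (a : ZMod (3 * (2 * k))) : pi k (pi k a) = a := by
  rcases eq_or_ne (r3 k a) 0 with h0 | h0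
  · have hinner : pi k a = a + 1 := by rw [pi, if_pos h0]
    have h' : r3 k (a + 1) = 1 := by rw [map_add, h0, map_one, zero_add]
    rw [hinner, pi, if_neg (by rw [h']; decide), if_pos h']
    ring
  · rcases eq_or_ne (r3 k a) 1 with h1 | h1
    · have hinner : pi k a = a - 1 := by rw [pi, if_neg h0, if_pos h1]
      have h' : r3 k (a - 1) = 0 := by rw [map_sub, h1, map_one, sub_self]
      rw [hinner, pi, if_pos h']
      ring
    · have hinner : pi k a = a := by rw [pi, if_neg h0, if_neg h1]
      rw [hinner, hinner]

lemma cross_iff (a b : ZMod (3 * (2 * k))) :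
    (∃ i : ZMod (3 * (2 * k)),
        (a = 3 * i ∧ b = 3 * i + 1) ∨ (a = 3 * i + 1 ∧ b = 3 * i) ∨
          (a = 3 * i + 2 ∧ b = 3 * i + 2)) ↔ b = pi k a := by
  have h3 : ∀ z : ZMod 3, z ≠ 0 → z ≠ 1 → z = 2 := by decide
  constructor
  · rintro ⟨i, ⟨rfl, rfl⟩ | ⟨rfl, rfl⟩ | ⟨rfl, rfl⟩⟩
    · have h0 : r3 k (3 * i) = 0 := (mult3 k hk _).mp ⟨i, rfl⟩
      rw [pi, if_pos h0]
    · have h1 : r3 k (3 * i + 1) = 1 := by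
        rw [map_add, (mult3 k hk (3*i)).mp ⟨i, rfl⟩, map_one, zero_add]
      rw [pi, if_neg (by rw [h1]; decide), if_pos h1]
      ring
    · have h2 : r3 k (3 * i + 2) = 2 := by
        have : r3 k 2 = 2 := map_ofNat _ 2
        rw [map_add, (mult3 k hk (3*i)).mp ⟨i, rfl⟩, this, zero_add]
      rw [pi, if_neg (by rw [h2]; decide), if_neg (by rw [h2]; decide)]
  · intro hb
    rcases eq_or_ne (r3 k a) 0 with h0 | h0
    · obtain ⟨i, rfl⟩ := (mult3 k hk a).mpr h0
      rw [pi, if_pos h0] at hb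
      exact ⟨i, Or.inl ⟨rfl, hb⟩⟩
    · rcases eq_or_ne (r3 k a) 1 with h1 | h1
      · have : r3 k (a - 1) = 0 := by rw [map_sub, h1, map_one, sub_self]
        obtain ⟨i, hi⟩ := (mult3 k hk (a-1)).mpr this
        rw [pi, if_neg h0, if_pos h1] at hb
        exact ⟨i, Or.inr (Or.inl ⟨by rw [← hi]; ring, by rw [hb, hi]⟩)⟩
      · have h2 := h3 _ h0 h1
        have : r3 k (a - 2) = 0 := by
          have hc : r3 k 2 = 2 := map_ofNat _ 2
          rw [map_sub, h2, hc, sub_self]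
        obtain ⟨i, hi⟩ := (mult3 k hk (a-2)).mpr this
        rw [pi, if_neg h0, if_neg h1] at hb
        exact ⟨i, Or.inr (Or.inr ⟨by rw [← hi]; ring, by rw [hb, ← hi]; ring⟩)⟩

section Adj

lemma adj_ll (a b : ZMod (3 * (2 * k))) :
    (XI (2 * k)).Adj (Sum.inl a) (Sum.inl b) ↔ b = a + 1 ∨ b = a - 1 := by
  rw [XI, SimpleGraph.fromRel_adj]
  constructor
  · rintro ⟨-, h | h⟩
    · exact Or.inr (by linear_combination -h)
    · exact Or.inl (by linear_combination h)
  · rintro (rfl | rfl)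
    · refine ⟨fun h => one_ne k hk ?_, Or.inr (by ring)⟩
      have := Sum.inl.inj h
      linear_combination -this
    · refine ⟨fun h => one_ne k hk ?_, Or.inl (by ring)⟩
      have := Sum.inl.inj h
      linear_combination this

lemma adj_rr (a b : ZMod (3 * (2 * k))) :
    (XI (2 * k)).Adj (Sum.inr a) (Sum.inr b) ↔ b = a + 1 ∨ b = a - 1 := by
  rw [XI, SimpleGraph.fromRel_adj]
  constructor
  · rintro ⟨-, h | h⟩
    · exact Or.inr (by linear_combination -h)
    · exact Or.inl (by linear_combination h)
  · rintro (rfl | rfl)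
    · refine ⟨fun h => one_ne k hk ?_, Or.inr (by ring)⟩
      have := Sum.inr.inj h
      linear_combination -this
    · refine ⟨fun h => one_ne k hk ?_, Or.inl (by ring)⟩
      have := Sum.inr.inj h
      linear_combination this

lemma adj_lr (a b : ZMod (3 * (2 * k))) :
    (XI (2 * k)).Adj (Sum.inl a) (Sum.inr b) ↔ b = pi k a := by
  rw [XI, SimpleGraph.fromRel_adj]
  rw [show ((Sum.inl a : ZMod (3*(2*k)) ⊕ ZMod (3*(2*k))) ≠ Sum.inr b) ↔ True by simp]
  simp only [true_and, or_false]
  exact cross_iff k hk a b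

lemma nbhd_l (a : ZMod (3 * (2 * k))) :
    (XI (2 * k)).neighborSet (Sum.inl a) =
      {Sum.inl (a + 1), Sum.inl (a - 1), Sum.inr (pi k a)} := by
  ext y
  rcases y with b | b
  · simp only [SimpleGraph.mem_neighborSet, adj_ll k hk, Set.mem_insert_iff,
      Set.mem_singleton_iff, Sum.inl.injEq]
    constructor
    · rintro (rfl | rfl) <;> simp
    · rintro (h | h | h) <;> simp_all
  · simp only [SimpleGraph.mem_neighborSet, adj_lr k hk, Set.mem_insert_iff,
      Set.mem_singleton_iff, Sum.inr.injEq]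
    constructor
    · rintro rfl; simp
    · rintro (h | h | h) <;> simp_all

lemma nbhd_r (a : ZMod (3 * (2 * k))) :
    (XI (2 * k)).neighborSet (Sum.inr a) =
      {Sum.inr (a + 1), Sum.inr (a - 1), Sum.inl (pi k a)} := by
  ext y
  rcases y with b | b
  · have : (XI (2 * k)).Adj (Sum.inr a) (Sum.inl b) ↔ a = pi k b := by
      rw [SimpleGraph.adj_comm, adj_lr k hk]
    simp only [SimpleGraph.mem_neighborSet, this, Set.mem_insert_iff,
      Set.mem_singleton_iff, Sum.inl.injEq]
    constructor
    · rintro rfl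
      simp [pi_pi k hk]
    · rintro (h | h | h) <;> simp_all [pi_pi k hk]
  · have : (XI (2 * k)).Adj (Sum.inr a) (Sum.inr b) ↔ b = a + 1 ∨ b = a - 1 := adj_rr k hk a b
    simp only [SimpleGraph.mem_neighborSet, this, Set.mem_insert_iff,
      Set.mem_singleton_iff, Sum.inr.injEq]
    constructor
    · rintro (rfl | rfl) <;> simp
    · rintro (h | h | h) <;> simp_all

end Adj

omit hk

def h6 (ρ : ZMod 6) : Fin 2 := if ρ = 0 ∨ ρ = 3 then 0 else 1

def x6 (ρ : ZMod 6) : Fin 2 := if ρ = 0 ∨ ρ = 2 ∨ ρ = 4 then 0 else 1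

def F : ZMod (3*(2*k)) ⊕ ZMod (3*(2*k)) → ZMod (3*(2*k)) ⊕ ZMod (3*(2*k)) → Fin 2
  | Sum.inl _, Sum.inl _ => 0
  | Sum.inr a, Sum.inr b =>
      max (if b = a + 1 then h6 (r k a) else 0) (if a = b + 1 then h6 (r k b) else 0)
  | Sum.inl a, Sum.inr b => if b = pi k a then x6 (r k a) else 0
  | Sum.inr a, Sum.inl b => if a = pi k b then x6 (r k b) else 0

lemma F_symm : ∀ x y, F k x y = F k y x := by
  rintro (a | a) (b | b) <;> simp [F, max_comm]

def col : Sym2 (ZMod (3*(2*k)) ⊕ ZMod (3*(2*k))) → Fin 2 := Sym2.lift ⟨F k, F_symm k⟩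

lemma fin2_max_zero : ∀ v : Fin 2, max v 0 = v := by decide
lemma fin2_zero_max : ∀ v : Fin 2, max 0 v = v := by decide

lemma col_ll (a b : ZMod (3*(2*k))) : col k s(Sum.inl a, Sum.inl b) = 0 := by
  rw [col, Sym2.lift_mk]
  rfl

lemma col_lr (a : ZMod (3*(2*k))) :
    col k s(Sum.inl a, Sum.inr (pi k a)) = x6 (r k a) := by
  rw [col, Sym2.lift_mk]
  show (if pi k a = pi k a then x6 (r k a) else 0) = x6 (r k a)
  rw [if_pos rfl]

lemma col_rl (hk : 1 ≤ k) (a : ZMod (3*(2*k))) :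
    col k s(Sum.inr a, Sum.inl (pi k a)) = x6 (pi6 (r k a)) := by
  rw [col, Sym2.lift_mk]
  show (if a = pi k (pi k a) then x6 (r k (pi k a)) else 0) = x6 (pi6 (r k a))
  rw [pi_pi k hk, if_pos rfl, r_pi]

lemma col_rr_succ (hk : 1 ≤ k) (a : ZMod (3*(2*k))) :
    col k s(Sum.inr a, Sum.inr (a + 1)) = h6 (r k a) := by
  rw [col, Sym2.lift_mk]
  show max (if a + 1 = a + 1 then h6 (r k a) else 0)
    (if a = a + 1 + 1 then h6 (r k (a+1)) else 0) = h6 (r k a)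
  rw [if_pos rfl, if_neg (fun h => two_ne k hk (by linear_combination -h)), fin2_max_zero]

lemma col_rr_pred (hk : 1 ≤ k) (a : ZMod (3*(2*k))) :
    col k s(Sum.inr a, Sum.inr (a - 1)) = h6 (r k a - 1) := by
  rw [col, Sym2.lift_mk]
  show max (if a - 1 = a + 1 then h6 (r k a) else 0)
    (if a = a - 1 + 1 then h6 (r k (a-1)) else 0) = h6 (r k a - 1)
  rw [if_neg (fun h => two_ne k hk (by linear_combination -h)), if_pos (by ring),
    fin2_zero_max, map_sub, map_one]

lemma ncard_sep_triple {α : Type*} [DecidableEq α] {a b c : α} (hab : a ≠ b) (hac : a ≠ c)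
    (hbc : b ≠ c) (p : α → Prop) [DecidablePred p] :
    {y | y ∈ ({a, b, c} : Set α) ∧ p y}.ncard
      = (if p a then 1 else 0) + (if p b then 1 else 0) + (if p c then 1 else 0) := by
  have h : {y | y ∈ ({a, b, c} : Set α) ∧ p y} = ↑(({a, b, c} : Finset α).filter p) := by
    ext y; simp
  rw [h, Set.ncard_coe_finset, Finset.card_filter,
    show ({a, b, c} : Finset α) = insert a (insert b {c}) from rfl,
    Finset.sum_insert (by simp [hab, hac]), Finset.sum_insert (by simp [hbc]),
    Finset.sum_singleton]
  ring

def DL (i : Fin 2) (ρ : ZMod 6) : ℕ :=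
  (if (0:Fin 2) = i then 1 else 0) + (if (0:Fin 2) = i then 1 else 0)
    + (if x6 ρ = i then 1 else 0)

def DR (i : Fin 2) (ρ : ZMod 6) : ℕ :=
  (if h6 ρ = i then 1 else 0) + (if h6 (ρ - 1) = i then 1 else 0)
    + (if x6 (pi6 ρ) = i then 1 else 0)

lemma key : ∀ (i : Fin 2) (ρ : ZMod 6),
    DL i ρ ≠ DL i (ρ + 1) ∧ DR i ρ ≠ DR i (ρ + 1) ∧ DL i ρ ≠ DR i (pi6 ρ) := by decide

lemma nbhdH_l (hk : 1 ≤ k) (i : Fin 2) (a : ZMod (3*(2*k))) :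
    (SimpleGraph.fromEdgeSet
        {e | e ∈ (XI (2*k)).edgeSet ∧ col k e = i}).neighborSet (Sum.inl a)
      = {y | y ∈ ({Sum.inl (a+1), Sum.inl (a-1), Sum.inr (pi k a)} :
          Set (ZMod (3*(2*k)) ⊕ ZMod (3*(2*k)))) ∧ col k s(Sum.inl a, y) = i} := by
  ext y
  simp only [SimpleGraph.mem_neighborSet, SimpleGraph.fromEdgeSet_adj, Set.mem_setOf_eq,
    SimpleGraph.mem_edgeSet, ← nbhd_l k hk a]
  constructor
  · rintro ⟨⟨hadj, hcol⟩, -⟩; exact ⟨hadj, hcol⟩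
  · rintro ⟨hadj, hcol⟩
    exact ⟨⟨hadj, hcol⟩, hadj.ne⟩

lemma nbhdH_r (hk : 1 ≤ k) (i : Fin 2) (a : ZMod (3*(2*k))) :
    (SimpleGraph.fromEdgeSet
        {e | e ∈ (XI (2*k)).edgeSet ∧ col k e = i}).neighborSet (Sum.inr a)
      = {y | y ∈ ({Sum.inr (a+1), Sum.inr (a-1), Sum.inl (pi k a)} :
          Set (ZMod (3*(2*k)) ⊕ ZMod (3*(2*k)))) ∧ col k s(Sum.inr a, y) = i} := by
  ext y
  simp only [SimpleGraph.mem_neighborSet, SimpleGraph.fromEdgeSet_adj, Set.mem_setOf_eq,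
    SimpleGraph.mem_edgeSet, ← nbhd_r k hk a]
  constructor
  · rintro ⟨⟨hadj, hcol⟩, -⟩; exact ⟨hadj, hcol⟩
  · rintro ⟨hadj, hcol⟩
    exact ⟨⟨hadj, hcol⟩, hadj.ne⟩

lemma inl_ne (hk : 1 ≤ k) (a : ZMod (3*(2*k))) :
    (Sum.inl (a+1) : ZMod (3*(2*k)) ⊕ ZMod (3*(2*k))) ≠ Sum.inl (a-1) := by
  intro h
  exact two_ne k hk (by linear_combination Sum.inl.inj h)

lemma inr_ne (hk : 1 ≤ k) (a : ZMod (3*(2*k))) :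
    (Sum.inr (a+1) : ZMod (3*(2*k)) ⊕ ZMod (3*(2*k))) ≠ Sum.inr (a-1) := by
  intro h
  exact two_ne k hk (by linear_combination Sum.inr.inj h)

lemma degL (hk : 1 ≤ k) (i : Fin 2) (a : ZMod (3*(2*k))) :
    ((SimpleGraph.fromEdgeSet
        {e | e ∈ (XI (2*k)).edgeSet ∧ col k e = i}).neighborSet (Sum.inl a)).ncard
      = DL i (r k a) := by
  rw [nbhdH_l k hk i a,
    ncard_sep_triple (inl_ne k hk a) (by simp) (by simp) _,
    col_ll, col_ll, col_lr, DL]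

lemma degR (hk : 1 ≤ k) (i : Fin 2) (a : ZMod (3*(2*k))) :
    ((SimpleGraph.fromEdgeSet
        {e | e ∈ (XI (2*k)).edgeSet ∧ col k e = i}).neighborSet (Sum.inr a)).ncard
      = DR i (r k a) := by
  rw [nbhdH_r k hk i a,
    ncard_sep_triple (inr_ne k hk a) (by simp) (by simp) _,
    col_rr_succ k hk, col_rr_pred k hk, col_rl k hk, DR]

end XIaux

/-- For every positive integer `k`, the graph `XI (2k)` has locally irregular chromatic
index exactly 2. -/
theorem XI_even_LIEC (k : ℕ) (hk : 1 ≤ k) :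
    HasLIEC (XI (2 * k)) 2 ∧ ¬ HasLIEC (XI (2 * k)) 1 := by
  open XIaux in
  constructor
  · refine ⟨col k, fun i u v hadj => ?_⟩
    have hG : (XI (2*k)).Adj u v := by
      rw [SimpleGraph.fromEdgeSet_adj] at hadj
      exact ((XI (2*k)).mem_edgeSet).mp hadj.1.1
    rcases u with a | a <;> rcases v with b | b
    · rw [degL k hk, degL k hk]
      rcases (adj_ll k hk a b).mp hG with rfl | rfl
      · rw [map_add, map_one]; exact (key i (r k a)).1
      · rw [map_sub, map_one]
        have := (key i (r k a - 1)).1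
        rw [sub_add_cancel] at this
        exact this.symm
    · rw [degL k hk, degR k hk]
      obtain rfl := (adj_lr k hk a b).mp hG
      rw [r_pi]
      exact (key i (r k a)).2.2
    · rw [degR k hk, degL k hk]
      obtain rfl := (adj_lr k hk b a).mp hG.symm
      rw [r_pi]
      exact ((key i (r k b)).2.2).symm
    · rw [degR k hk, degR k hk]
      rcases (adj_rr k hk a b).mp hG with rfl | rfl
      · rw [map_add, map_one]; exact (key i (r k a)).2.1
      · rw [map_sub, map_one]
        have := (key i (r k a - 1)).2.1
        rw [sub_add_cancel] at this
        exact this.symm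
  · rintro ⟨c, hc⟩
    have hE : {e | e ∈ (XI (2*k)).edgeSet ∧ c e = 0} = (XI (2*k)).edgeSet := by
      ext e
      simp [Subsingleton.elim (c e) 0]
    have h0 := hc 0
    rw [hE, SimpleGraph.fromEdgeSet_edgeSet] at h0
    have hadj : (XI (2*k)).Adj (Sum.inl 0) (Sum.inl 1) :=
      (adj_ll k hk 0 1).mpr (Or.inl (by ring))
    apply h0 hadj
    have deg3 : ∀ a : ZMod (3*(2*k)), ((XI (2*k)).neighborSet (Sum.inl a)).ncard = 3 := by
      intro a
      rw [nbhd_l k hk]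
      exact Set.ncard_eq_three.mpr
        ⟨_, _, _, inl_ne k hk a, by simp, by simp, rfl⟩
    rw [deg3, deg3]
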